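/- Under the same setup as the single-block storage lemma, if additionally ṽ-passivity of f holds (v = -(∇f(x)-∇f(x*)) + ũ componentwise as defined), the total storage S := Σᵢ Sᵢ satisfies Ṡ ≤ x̃ᵀũ - Σᵢ(dᵢvᵢ² + Σ_{k≥2} δ_{ik}ξ_{ik}²) ≤ x̃ᵀũ, where δ_{ik} = a_{ik}/c_{ik} > 0. -/

import Mathlib

open Finset

/-- Monotonicity of the gradient of a convex function. -/
lemma grad_mono_aux {E : Type*} [NormedAddCommGroup E] [InnerProductSpace ℝ E] [CompleteSpace E]
    {f : E → ℝ} {gradf : E → E}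
    (hf : ConvexOn ℝ Set.univ f) (hf' : ∀ x, HasGradientAt f (gradf x) x)
    (p q : E) : 0 ≤ (inner ℝ (gradf q - gradf p) (q - p) : ℝ) := by
  set g : ℝ → ℝ := fun s => f (p + s • (q - p)) with hg
  have hline : ∀ s : ℝ, HasDerivAt (fun s : ℝ => p + s • (q - p)) (q - p) s := by
    intro s
    simpa using ((hasDerivAt_id s).smul_const (q - p)).const_add p
  have hgd : ∀ s : ℝ, HasDerivAt g ((inner ℝ (gradf (p + s • (q - p))) (q - p) : ℝ)) s := by
    intro s
    have := (hf' (p + s • (q - p))).hasFDerivAt.comp_hasDerivAt s (hline s)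
    simp at this
    exact this
  have hgc : ConvexOn ℝ Set.univ g := by
    have := hf.comp_affineMap (AffineMap.lineMap p q : ℝ →ᵃ[ℝ] E)
    have heq : (f ∘ (AffineMap.lineMap p q : ℝ →ᵃ[ℝ] E)) = g := by
      funext s
      simp [g, AffineMap.lineMap_apply]
      congr 1
      module
    rw [heq] at this
    refine ConvexOn.subset this (by simp) (convex_univ)
  have h1 : (inner ℝ (gradf p) (q - p) : ℝ) ≤ slope g 0 1 := by
    have := hgc.le_slope_of_hasDerivAt (Set.mem_univ 0) (Set.mem_univ 1) one_pos (hgd 0)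
    simpa using this
  have h2 : slope g 0 1 ≤ (inner ℝ (gradf q) (q - p) : ℝ) := by
    have := hgc.slope_le_of_hasDerivAt (Set.mem_univ 0) (Set.mem_univ 1) one_pos (hgd 1)
    simpa using this
  have := h1.trans h2
  rw [inner_sub_left]
  linarith

/-- Passivity of the whole primal block: with v = -(∇f(x) - ∇f(x*)) + ũ componentwise
 and f convex, the total storage S = Σᵢ Sᵢ satisfies
 Ṡ ≤ x̃ᵀũ - Σᵢ(dᵢvᵢ² + Σ_{k≥2}δ_{ik}ξ_{ik}²) ≤ x̃ᵀũ. -/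
theorem stmt_6 {n : ℕ} {N : Fin n → ℕ}
    (f : EuclideanSpace ℝ (Fin n) → ℝ)
    (gradf : EuclideanSpace ℝ (Fin n) → EuclideanSpace ℝ (Fin n))
    (hf : ConvexOn ℝ Set.univ f)
    (hf' : ∀ x, HasGradientAt f (gradf x) x)
    (xs : EuclideanSpace ℝ (Fin n))
    (c a : (i : Fin n) → Fin (N i + 1) → ℝ) (d : Fin n → ℝ)
    (hc : ∀ i k, 0 < c i k) (ha : ∀ i k, k ≠ 0 → 0 < a i k) (hd : ∀ i, 0 ≤ d i)
    (v u : Fin n → ℝ → ℝ) (ξ : (i : Fin n) → Fin (N i + 1) → ℝ → ℝ)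
    (x : ℝ → EuclideanSpace ℝ (Fin n))
    -- dynamics of each block and its output
    (hdyn0 : ∀ i t, HasDerivAt (ξ i 0) (c i 0 * v i t) t)
    (hdyn : ∀ i, ∀ k, k ≠ 0 → ∀ t, HasDerivAt (ξ i k) (-a i k * ξ i k t + c i k * v i t) t)
    (hx : ∀ i t, x t i = (∑ k, ξ i k t) + d i * v i t)
    -- input decomposition: v = -(∇f(x) - ∇f(x*)) + ũ componentwise
    (hv : ∀ i t, v i t = -(gradf (x t) i - gradf xs i) + u i t)
    (S : ℝ → ℝ)
    (hS : ∀ t, S t = ∑ i, ((1 / (2 * c i 0)) * (ξ i 0 t - xs i) ^ 2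
        + ∑ k ∈ univ.erase 0, (1 / (2 * c i k)) * (ξ i k t) ^ 2)) :
    ∀ t, ∃ D : ℝ, HasDerivAt S D t ∧
      D ≤ (∑ i, (x t i - xs i) * u i t)
          - ∑ i, (d i * (v i t) ^ 2 + ∑ k ∈ univ.erase 0, (a i k / c i k) * (ξ i k t) ^ 2) ∧
      (∑ i, (x t i - xs i) * u i t)
          - (∑ i, (d i * (v i t) ^ 2 + ∑ k ∈ univ.erase 0, (a i k / c i k) * (ξ i k t) ^ 2))
        ≤ ∑ i, (x t i - xs i) * u i t := by
  intro t
  set B : ℝ := ∑ i, (d i * (v i t) ^ 2 + ∑ k ∈ univ.erase 0, (a i k / c i k) * (ξ i k t) ^ 2)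
    with hB
  refine ⟨(∑ i, (x t i - xs i) * v i t) - B, ?_, ?_, ?_⟩
  · -- derivative of S
    have hSe : S = fun t => ∑ i, ((1 / (2 * c i 0)) * (ξ i 0 t - xs i) ^ 2
        + ∑ k ∈ univ.erase 0, (1 / (2 * c i k)) * (ξ i k t) ^ 2) := funext hS
    rw [hSe]
    have hterm : ∀ i : Fin n, HasDerivAt
        (fun t => (1 / (2 * c i 0)) * (ξ i 0 t - xs i) ^ 2
          + ∑ k ∈ univ.erase 0, (1 / (2 * c i k)) * (ξ i k t) ^ 2)
        ((x t i - xs i) * v i t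
          - (d i * (v i t) ^ 2 + ∑ k ∈ univ.erase 0, (a i k / c i k) * (ξ i k t) ^ 2)) t := by
      intro i
      have h0 : HasDerivAt (fun t => (1 / (2 * c i 0)) * (ξ i 0 t - xs i) ^ 2)
          ((1 / (2 * c i 0)) * ((2 : ℕ) * (ξ i 0 t - xs i) ^ 1 * (c i 0 * v i t))) t :=
        (((hdyn0 i t).sub_const _).pow 2).const_mul _
      have hk : HasDerivAt (fun t => ∑ k ∈ univ.erase 0, (1 / (2 * c i k)) * (ξ i k t) ^ 2)
          (∑ k ∈ univ.erase 0, (1 / (2 * c i k)) *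
            ((2 : ℕ) * (ξ i k t) ^ 1 * (-a i k * ξ i k t + c i k * v i t))) t := by
        refine HasDerivAt.fun_sum fun k hk => ?_
        exact ((hdyn i k (mem_erase.mp hk).1 t).pow 2).const_mul _
      have := h0.fun_add hk
      refine this.congr_deriv (Eq.symm ?_)
      have hc0 : c i 0 ≠ 0 := (hc i 0).ne'
      have hxi : x t i = (ξ i 0 t + ∑ k ∈ univ.erase 0, ξ i k t) + d i * v i t := by
        rw [hx i t, ← Finset.add_sum_erase univ (fun k => ξ i k t) (mem_univ 0)]
      rw [hxi]
      have hsum : ∑ k ∈ univ.erase 0, (1 / (2 * c i k)) *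
            ((2 : ℕ) * (ξ i k t) ^ 1 * (-a i k * ξ i k t + c i k * v i t))
          = ∑ k ∈ univ.erase 0, (ξ i k t * v i t - (a i k / c i k) * (ξ i k t) ^ 2) := by
        refine Finset.sum_congr rfl fun k _ => ?_
        have hck : c i k ≠ 0 := (hc i k).ne'
        field_simp
        ring
      rw [hsum, Finset.sum_sub_distrib, ← Finset.sum_mul]
      field_simp
      ring
    have := HasDerivAt.fun_sum (fun i (_ : i ∈ (univ : Finset (Fin n))) => hterm i)
    refine this.congr_deriv (Eq.symm ?_)
    rw [hB, ← Finset.sum_sub_distrib]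
  · -- first inequality
    have hmono := grad_mono_aux hf hf' xs (x t)
    have hinner : (inner ℝ (gradf (x t) - gradf xs) (x t - xs : EuclideanSpace ℝ (Fin n)) : ℝ)
        = ∑ i, (gradf (x t) i - gradf xs i) * (x t i - xs i) := by
      rw [PiLp.inner_apply]
      refine Finset.sum_congr rfl fun i _ => ?_
      simp [RCLike.inner_apply, mul_comm]
    have key : (∑ i, (x t i - xs i) * v i t)
        = (∑ i, (x t i - xs i) * u i t)
          - ∑ i, (gradf (x t) i - gradf xs i) * (x t i - xs i) := by
      rw [← Finset.sum_sub_distrib]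
      refine Finset.sum_congr rfl fun i _ => ?_
      rw [hv i t]; ring
    have h0 : 0 ≤ ∑ i, (gradf (x t) i - gradf xs i) * (x t i - xs i) := by
      rw [← hinner]; exact hmono
    rw [key]
    linarith
  · -- second inequality
    have hBnn : 0 ≤ B := by
      rw [hB]
      refine Finset.sum_nonneg fun i _ => add_nonneg
        (mul_nonneg (hd i) (sq_nonneg _))
        (Finset.sum_nonneg fun k hk => mul_nonneg
          (div_nonneg (ha i k (mem_erase.mp hk).1).le (hc i k).le) (sq_nonneg _))
    linarith
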